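/- Assume good X. If fresh xs y X, then Abs xs x X = Abs xs y (X[(Var xs y)/x]_xs); that is, the bound variable of an abstraction can be renamed to any variable fresh for the body, via substitution. -/

import Mathlib

open scoped Classical

universe u

section Binding

variable (var varsort index bindex opsym : Type u)

/-! ### Inputs -/

/-- An `(α,β)`-input: a partial function from `α` to `β`. -/
abbrev Input (α β : Type u) : Type u := α → Option β

/-- The domain of an input. -/
def idom {α β : Type u} (inp : Input α β) : Set α := {a | inp a ≠ none}

/-- The componentwise lifting of a predicate to inputs. -/
def liftP {α β : Type u} (P : β → Prop) (inp : Input α β) : Prop :=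
  ∀ a b, inp a = some b → P b

/-- The componentwise lifting of a function to inputs. -/
def liftF {α β γ : Type u} (f : β → γ) (inp : Input α β) : Input α γ :=
  fun a => (inp a).map f

/-- An input is small if its domain has cardinality smaller than that of `var`. -/
def smallDom {α β : Type u} (inp : Input α β) : Prop :=
  Cardinal.mk (idom inp) < Cardinal.mk var

/-! ### Quasiterms -/

mutual
/-- Quasiterms: raw terms before quotienting by alpha-equivalence. -/
inductive QTerm : Type u where
  | qVar : varsort → var → QTerm
  | qOp : opsym → (index → Option QTerm) → (bindex → Option QAbs) → QTerm
/-- Quasiabstractions. -/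
inductive QAbs : Type u where
  | qAbs : varsort → var → QTerm → QAbs
end

/-- Transposition of two variables. -/
noncomputable def swapVar (z1 z2 x : var) : var :=
  if x = z1 then z2 else if x = z2 then z1 else x

/-- Sort-aware transposition of variables (acts only on variables of varsort `zs`). -/
noncomputable def swapVarS (zs xs : varsort) (z1 z2 x : var) : var :=
  if xs = zs then swapVar var z1 z2 x else x

variable {var varsort index bindex opsym}

/-- Swapping of the variables `z1`, `z2` at varsort `zs` in a quasiterm
(transposing them everywhere, including binding positions). -/
noncomputable def qSwap (z1 z2 : var) (zs : varsort) :
    QTerm var varsort index bindex opsym → QTerm var varsort index bindex opsym :=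
  QTerm.rec (motive_1 := fun _ => QTerm var varsort index bindex opsym)
    (motive_2 := fun _ => QAbs var varsort index bindex opsym)
    (motive_3 := fun _ => Option (QTerm var varsort index bindex opsym))
    (motive_4 := fun _ => Option (QAbs var varsort index bindex opsym))
    (fun xs x => .qVar xs (swapVarS var varsort zs xs z1 z2 x))
    (fun d _ _ rinp rbinp => .qOp d rinp rbinp)
    (fun xs x _ rX => .qAbs xs (swapVarS var varsort zs xs z1 z2 x) rX)
    none (fun _ r => some r) none (fun _ r => some r)

/-- Swapping of variables in a quasiabstraction. -/
noncomputable def qSwapAbs (z1 z2 : var) (zs : varsort) :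
    QAbs var varsort index bindex opsym → QAbs var varsort index bindex opsym
  | .qAbs xs x X => .qAbs xs (swapVarS var varsort zs xs z1 z2 x) (qSwap z1 z2 zs X)

/-! ### Freshness and goodness -/

mutual
/-- `QFresh ys y X`: the variable `y` of varsort `ys` has no free occurrence in `X`. -/
inductive QFresh : varsort → var → QTerm var varsort index bindex opsym → Prop where
  | qVar : ∀ {ys y xs x}, (ys, y) ≠ (xs, x) → QFresh ys y (.qVar xs x)
  | qOp : ∀ {ys y d inp binp}, (∀ i X, inp i = some X → QFresh ys y X) →
      (∀ j A, binp j = some A → QFreshAbs ys y A) → QFresh ys y (.qOp d inp binp)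
/-- Freshness for quasiabstractions. -/
inductive QFreshAbs : varsort → var → QAbs var varsort index bindex opsym → Prop where
  | qAbs_bound : ∀ {xs x X}, QFreshAbs xs x (.qAbs xs x X)
  | qAbs_body : ∀ {ys y xs x X}, QFresh ys y X → QFreshAbs ys y (.qAbs xs x X)
end

mutual
/-- Good quasiterms: all constructors branch less than `|var|`. -/
inductive QGood : QTerm var varsort index bindex opsym → Prop where
  | qVar : ∀ {xs x}, QGood (.qVar xs x)
  | qOp : ∀ {d inp binp}, (∀ i X, inp i = some X → QGood X) →
      (∀ j A, binp j = some A → QGoodAbs A) →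
      smallDom var inp → smallDom var binp → QGood (.qOp d inp binp)
/-- Good quasiabstractions. -/
inductive QGoodAbs : QAbs var varsort index bindex opsym → Prop where
  | qAbs : ∀ {xs x X}, QGood X → QGoodAbs (.qAbs xs x X)
end

/-! ### Alpha-equivalence -/

mutual
/-- Alpha-equivalence of quasiterms. -/
inductive Alpha : QTerm var varsort index bindex opsym →
    QTerm var varsort index bindex opsym → Prop where
  | qVar : ∀ {xs x}, Alpha (.qVar xs x) (.qVar xs x)
  | qOp : ∀ {d inp binp inp' binp'},
      (∀ i, inp i = none ↔ inp' i = none) →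
      (∀ i X X', inp i = some X → inp' i = some X' → Alpha X X') →
      (∀ j, binp j = none ↔ binp' j = none) →
      (∀ j A A', binp j = some A → binp' j = some A' → AlphaAbs A A') →
      Alpha (.qOp d inp binp) (.qOp d inp' binp')
/-- Alpha-equivalence of quasiabstractions (the exists-fresh formulation). -/
inductive AlphaAbs : QAbs var varsort index bindex opsym →
    QAbs var varsort index bindex opsym → Prop where
  | qAbs : ∀ {xs x x' X X' y}, y ∉ ({x, x'} : Set var) →
      QFresh xs y X → QFresh xs y X' →
      Alpha (qSwap y x xs X) (qSwap y x' xs X') →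
      AlphaAbs (.qAbs xs x X) (.qAbs xs x' X')
end

/-! ### Terms and abstractions as quotients -/

variable (var varsort index bindex opsym)

/-- Terms: quasiterms modulo alpha-equivalence. -/
def Term : Type u := Quot (@Alpha var varsort index bindex opsym)

/-- Abstractions: quasiabstractions modulo alpha-equivalence. -/
def Abstr : Type u := Quot (@AlphaAbs var varsort index bindex opsym)

variable {var varsort index bindex opsym}

/-- The projection from quasiterms to terms. -/
def tmk : QTerm var varsort index bindex opsym → Term var varsort index bindex opsym :=
  Quot.mk _

/-- The projection from quasiabstractions to abstractions. -/
def amk : QAbs var varsort index bindex opsym → Abstr var varsort index bindex opsym :=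
  Quot.mk _

/-- A representative of a term. -/
noncomputable def trep (X : Term var varsort index bindex opsym) :
    QTerm var varsort index bindex opsym := Quot.out X

/-- A representative of an abstraction. -/
noncomputable def arep (A : Abstr var varsort index bindex opsym) :
    QAbs var varsort index bindex opsym := Quot.out A

/-- Good terms. -/
def good (X : Term var varsort index bindex opsym) : Prop := QGood (trep X)

/-- Good abstractions. -/
def goodAbs (A : Abstr var varsort index bindex opsym) : Prop := QGoodAbs (arep A)

/-- The variable-injection constructor on terms. -/
def Var (xs : varsort) (x : var) : Term var varsort index bindex opsym :=
  tmk (.qVar xs x)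

/-- The operation constructor on terms. -/
noncomputable def Op (d : opsym) (inp : Input index (Term var varsort index bindex opsym))
    (binp : Input bindex (Abstr var varsort index bindex opsym)) :
    Term var varsort index bindex opsym :=
  tmk (.qOp d (liftF trep inp) (liftF arep binp))

/-- The abstraction constructor. -/
noncomputable def Abs (xs : varsort) (x : var) (X : Term var varsort index bindex opsym) :
    Abstr var varsort index bindex opsym :=
  amk (.qAbs xs x (trep X))

/-- Freshness on terms. -/
def fresh (ys : varsort) (y : var) (X : Term var varsort index bindex opsym) : Prop :=
  QFresh ys y (trep X)

/-- Freshness on abstractions. -/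
def freshAbs (ys : varsort) (y : var) (A : Abstr var varsort index bindex opsym) : Prop :=
  QFreshAbs ys y (arep A)

/-- Swapping on terms. -/
noncomputable def tswap (X : Term var varsort index bindex opsym)
    (z1 z2 : var) (zs : varsort) : Term var varsort index bindex opsym :=
  tmk (qSwap z1 z2 zs (trep X))

/-! ### Substitution -/

mutual
/-- The graph of capture-avoiding substitution on quasiterms:
`QSubst X Y y ys Z` means that `Z` is a result of substituting `Y` for the free
occurrences of the variable `y` of varsort `ys` in `X` (along a capture-free
representative). -/
inductive QSubst : QTerm var varsort index bindex opsym →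
    QTerm var varsort index bindex opsym → var → varsort →
    QTerm var varsort index bindex opsym → Prop where
  | var_eq : ∀ {Y y ys}, QSubst (.qVar ys y) Y y ys Y
  | var_ne : ∀ {Y y ys xs x}, (xs, x) ≠ (ys, y) → QSubst (.qVar xs x) Y y ys (.qVar xs x)
  | op : ∀ {Y y ys d inp binp inp' binp'},
      (∀ i, inp i = none ↔ inp' i = none) →
      (∀ i X X', inp i = some X → inp' i = some X' → QSubst X Y y ys X') →
      (∀ j, binp j = none ↔ binp' j = none) →
      (∀ j A A', binp j = some A → binp' j = some A' → QSubstAbs A Y y ys A') →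
      QSubst (.qOp d inp binp) Y y ys (.qOp d inp' binp')
/-- The graph of capture-avoiding substitution on quasiabstractions. -/
inductive QSubstAbs : QAbs var varsort index bindex opsym →
    QTerm var varsort index bindex opsym → var → varsort →
    QAbs var varsort index bindex opsym → Prop where
  | abs : ∀ {Y y ys xs x X X'}, (xs, x) ≠ (ys, y) → QFresh xs x Y →
      QSubst X Y y ys X' → QSubstAbs (.qAbs xs x X) Y y ys (.qAbs xs x X')
end

/-- The graph of capture-avoiding substitution on terms. -/
def SubstRel (X Y : Term var varsort index bindex opsym) (y : var) (ys : varsort)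
    (Z : Term var varsort index bindex opsym) : Prop :=
  ∃ qX qZ, tmk qX = X ∧ tmk qZ = Z ∧ QSubst qX (trep Y) y ys qZ

/-- Capture-avoiding substitution on terms: `subst X Y y ys` is `X[Y/y]_ys`. -/
noncomputable def subst (X Y : Term var varsort index bindex opsym)
    (y : var) (ys : varsort) : Term var varsort index bindex opsym :=
  if h : ∃ Z, SubstRel X Y y ys Z then h.choose else X

/-- The graph of capture-avoiding substitution on abstractions. -/
def SubstAbsRel (A : Abstr var varsort index bindex opsym)
    (Y : Term var varsort index bindex opsym) (y : var) (ys : varsort)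
    (B : Abstr var varsort index bindex opsym) : Prop :=
  ∃ qA qB, amk qA = A ∧ amk qB = B ∧ QSubstAbs qA (trep Y) y ys qB

/-- Capture-avoiding substitution on abstractions: `substAbs A Y y ys` is `A[Y/y]_ys`. -/
noncomputable def substAbs (A : Abstr var varsort index bindex opsym)
    (Y : Term var varsort index bindex opsym) (y : var) (ys : varsort) :
    Abstr var varsort index bindex opsym :=
  if h : ∃ B, SubstAbsRel A Y y ys B then h.choose else A

/-! ### Parallel substitution -/

mutual
/-- The graph of capture-avoiding parallel substitution on quasiterms, along an
assignment `ρ : varsort → var → Option qterm`. -/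
inductive QPSubst : QTerm var varsort index bindex opsym →
    (varsort → var → Option (QTerm var varsort index bindex opsym)) →
    QTerm var varsort index bindex opsym → Prop where
  | var_some : ∀ {ρ xs x Y}, ρ xs x = some Y → QPSubst (.qVar xs x) ρ Y
  | var_none : ∀ {ρ xs x}, ρ xs x = none → QPSubst (.qVar xs x) ρ (.qVar xs x)
  | op : ∀ {ρ d inp binp inp' binp'},
      (∀ i, inp i = none ↔ inp' i = none) →
      (∀ i X X', inp i = some X → inp' i = some X' → QPSubst X ρ X') →
      (∀ j, binp j = none ↔ binp' j = none) →
      (∀ j A A', binp j = some A → binp' j = some A' → QPSubstAbs A ρ A') →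
      QPSubst (.qOp d inp binp) ρ (.qOp d inp' binp')
/-- The graph of capture-avoiding parallel substitution on quasiabstractions. -/
inductive QPSubstAbs : QAbs var varsort index bindex opsym →
    (varsort → var → Option (QTerm var varsort index bindex opsym)) →
    QAbs var varsort index bindex opsym → Prop where
  | abs : ∀ {ρ xs x X X'}, ρ xs x = none →
      (∀ ys y Y, ρ ys y = some Y → QFresh xs x Y) →
      QPSubst X ρ X' → QPSubstAbs (.qAbs xs x X) ρ (.qAbs xs x X')
end

/-- Turning a term-valued assignment into a quasiterm-valued one, by picking
representatives. -/
noncomputable def qassign (ρ : varsort → var → Option (Term var varsort index bindex opsym)) :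
    varsort → var → Option (QTerm var varsort index bindex opsym) :=
  fun xs x => (ρ xs x).map trep

/-- The graph of parallel substitution on terms. -/
def PSubstRel (X : Term var varsort index bindex opsym)
    (ρ : varsort → var → Option (Term var varsort index bindex opsym))
    (Z : Term var varsort index bindex opsym) : Prop :=
  ∃ qX qZ, tmk qX = X ∧ tmk qZ = Z ∧ QPSubst qX (qassign ρ) qZ

/-- Capture-avoiding parallel substitution on terms: `psubst X ρ` is `X[ρ]`. -/
noncomputable def psubst (X : Term var varsort index bindex opsym)
    (ρ : varsort → var → Option (Term var varsort index bindex opsym)) :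
    Term var varsort index bindex opsym :=
  if h : ∃ Z, PSubstRel X ρ Z then h.choose else X

/-- The graph of parallel substitution on abstractions. -/
def PSubstAbsRel (A : Abstr var varsort index bindex opsym)
    (ρ : varsort → var → Option (Term var varsort index bindex opsym))
    (B : Abstr var varsort index bindex opsym) : Prop :=
  ∃ qA qB, amk qA = A ∧ amk qB = B ∧ QPSubstAbs qA (qassign ρ) qB

/-- Capture-avoiding parallel substitution on abstractions. -/
noncomputable def psubstAbs (A : Abstr var varsort index bindex opsym)
    (ρ : varsort → var → Option (Term var varsort index bindex opsym)) :
    Abstr var varsort index bindex opsym :=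
  if h : ∃ B, PSubstAbsRel A ρ B then h.choose else A

/-! ### Auxiliary development for `abs_rename` -/

section RenameAux

/-! #### swapVar algebra -/

@[simp] lemma swapVar_left (z1 z2 : var) : swapVar var z1 z2 z1 = z2 := by
  simp [swapVar]

@[simp] lemma swapVar_right (z1 z2 : var) : swapVar var z1 z2 z2 = z1 := by
  unfold swapVar; split_ifs with h <;> simp_all

lemma swapVar_of_ne {z1 z2 x : var} (h1 : x ≠ z1) (h2 : x ≠ z2) :
    swapVar var z1 z2 x = x := by
  simp [swapVar, h1, h2]

@[simp] lemma swapVar_self (z x : var) : swapVar var z z x = x := by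
  unfold swapVar; split_ifs <;> simp_all

@[simp] lemma swapVar_invol (z1 z2 x : var) :
    swapVar var z1 z2 (swapVar var z1 z2 x) = x := by
  unfold swapVar; split_ifs <;> simp_all

lemma swapVar_inj {z1 z2 a b : var} (h : swapVar var z1 z2 a = swapVar var z1 z2 b) :
    a = b := by
  have := congrArg (swapVar var z1 z2) h
  rwa [swapVar_invol, swapVar_invol] at this

lemma swapVar_comm (z1 z2 u v x : var) :
    swapVar var z1 z2 (swapVar var u v x) =
      swapVar var (swapVar var z1 z2 u) (swapVar var z1 z2 v) (swapVar var z1 z2 x) := by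
  unfold swapVar; split_ifs <;> simp_all

/-! #### swapVarS algebra -/

@[simp] lemma swapVarS_self (zs xs : varsort) (z x : var) :
    swapVarS var varsort zs xs z z x = x := by
  unfold swapVarS; split_ifs <;> simp

@[simp] lemma swapVarS_invol (zs xs : varsort) (z1 z2 x : var) :
    swapVarS var varsort zs xs z1 z2 (swapVarS var varsort zs xs z1 z2 x) = x := by
  unfold swapVarS; split_ifs <;> simp

lemma swapVarS_inj {zs xs : varsort} {z1 z2 a b : var}
    (h : swapVarS var varsort zs xs z1 z2 a = swapVarS var varsort zs xs z1 z2 b) :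
    a = b := by
  have := congrArg (swapVarS var varsort zs xs z1 z2) h
  rwa [swapVarS_invol, swapVarS_invol] at this

lemma swapVarS_comm (zs us xs : varsort) (z1 z2 u v x : var) :
    swapVarS var varsort zs xs z1 z2 (swapVarS var varsort us xs u v x) =
      swapVarS var varsort us xs (swapVarS var varsort zs us z1 z2 u)
        (swapVarS var varsort zs us z1 z2 v) (swapVarS var varsort zs xs z1 z2 x) := by
  unfold swapVarS
  split_ifs <;> first
    | rfl
    | (apply swapVar_comm)
    | simp_all

/-! #### qSwap computation rules -/

lemma qSwap_qVar (z1 z2 : var) (zs xs : varsort) (x : var) :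
    qSwap z1 z2 zs (QTerm.qVar xs x : QTerm var varsort index bindex opsym)
      = QTerm.qVar xs (swapVarS var varsort zs xs z1 z2 x) := rfl

lemma qSwapAbs_qAbs (z1 z2 : var) (zs xs : varsort) (x : var)
    (X : QTerm var varsort index bindex opsym) :
    qSwapAbs z1 z2 zs (QAbs.qAbs xs x X)
      = QAbs.qAbs xs (swapVarS var varsort zs xs z1 z2 x) (qSwap z1 z2 zs X) := rfl

lemma qSwap_qOp (z1 z2 : var) (zs : varsort) (d : opsym)
    (inp : index → Option (QTerm var varsort index bindex opsym))
    (binp : bindex → Option (QAbs var varsort index bindex opsym)) :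
    qSwap z1 z2 zs (QTerm.qOp d inp binp)
      = QTerm.qOp d (fun i => (inp i).map (qSwap z1 z2 zs))
          (fun j => (binp j).map (qSwapAbs z1 z2 zs)) := by
  show QTerm.qOp d _ _ = _
  congr 1
  · funext i; cases h : inp i <;> rfl
  · funext j
    cases h : binp j with
    | none => rfl
    | some A => cases A; rfl

/-! #### structural induction helper -/

theorem qterm_ind {P : QTerm var varsort index bindex opsym → Prop}
    {Q : QAbs var varsort index bindex opsym → Prop}
    (hvar : ∀ xs x, P (.qVar xs x))
    (hop : ∀ d inp binp, (∀ i X, inp i = some X → P X) →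
      (∀ j A, binp j = some A → Q A) → P (.qOp d inp binp))
    (habs : ∀ xs x X, P X → Q (.qAbs xs x X)) :
    (∀ X, P X) ∧ (∀ A, Q A) := by
  constructor
  · intro X
    refine QTerm.rec (motive_1 := fun X => P X) (motive_2 := fun A => Q A)
      (motive_3 := fun o => ∀ X, o = some X → P X)
      (motive_4 := fun o => ∀ A, o = some A → Q A)
      hvar (fun d inp binp rinp rbinp => hop d inp binp rinp rbinp)
      (fun xs x X hX => habs xs x X hX)
      (fun X h => by cases h)
      (fun X hX X' h => by cases h; exact hX)
      (fun A h => by cases h)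
      (fun A hA A' h => by cases h; exact hA) X
  · intro A
    refine QAbs.rec (motive_1 := fun X => P X) (motive_2 := fun A => Q A)
      (motive_3 := fun o => ∀ X, o = some X → P X)
      (motive_4 := fun o => ∀ A, o = some A → Q A)
      hvar (fun d inp binp rinp rbinp => hop d inp binp rinp rbinp)
      (fun xs x X hX => habs xs x X hX)
      (fun X h => by cases h)
      (fun X hX X' h => by cases h; exact hX)
      (fun A h => by cases h)
      (fun A hA A' h => by cases h; exact hA) A

/-! #### occurrences -/

mutual
/-- All (sorted) variable occurrences in a quasiterm, free or bound. -/
inductive OccT : varsort × var → QTerm var varsort index bindex opsym → Prop where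
  | var : ∀ xs x, OccT (xs, x) (.qVar xs x)
  | opT : ∀ {p d inp binp} (i : index) X, inp i = some X → OccT p X → OccT p (.qOp d inp binp)
  | opA : ∀ {p d inp binp} (j : bindex) A, binp j = some A → OccA p A → OccT p (.qOp d inp binp)
/-- Occurrences in a quasiabstraction. -/
inductive OccA : varsort × var → QAbs var varsort index bindex opsym → Prop where
  | bound : ∀ xs x X, OccA (xs, x) (.qAbs xs x X)
  | body : ∀ {p xs x X}, OccT p X → OccA p (.qAbs xs x X)
end

lemma fresh_of_not_occ_pair (ws : varsort) (v : var) :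
    (∀ X : QTerm var varsort index bindex opsym, ¬ OccT (ws, v) X → QFresh ws v X) ∧
    (∀ A : QAbs var varsort index bindex opsym, ¬ OccA (ws, v) A → QFreshAbs ws v A) := by
  refine qterm_ind ?_ ?_ ?_
  · intro xs x h
    refine QFresh.qVar (fun he => ?_)
    rw [Prod.mk.injEq] at he
    obtain ⟨rfl, rfl⟩ := he
    exact h (OccT.var _ _)
  · intro d inp binp hi hb h
    exact QFresh.qOp (fun i X hX => hi i X hX (fun hocc => h (OccT.opT i X hX hocc)))
      (fun j A hA => hb j A hA (fun hocc => h (OccT.opA j A hA hocc)))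
  · intro xs x X hX h
    by_cases he : (ws, v) = (xs, x)
    · rw [Prod.mk.injEq] at he
      obtain ⟨rfl, rfl⟩ := he
      exact QFreshAbs.qAbs_bound
    · exact QFreshAbs.qAbs_body (hX (fun hocc => h (OccA.body hocc)))

lemma fresh_of_not_occ {ws : varsort} {v : var} {X : QTerm var varsort index bindex opsym}
    (h : ¬ OccT (ws, v) X) : QFresh ws v X :=
  (fresh_of_not_occ_pair ws v).1 X h

lemma occ_swap_pair (z1 z2 : var) (zs : varsort) :
    (∀ X : QTerm var varsort index bindex opsym, ∀ ws v, OccT (ws, v) X →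
      OccT (ws, swapVarS var varsort zs ws z1 z2 v) (qSwap z1 z2 zs X)) ∧
    (∀ A : QAbs var varsort index bindex opsym, ∀ ws v, OccA (ws, v) A →
      OccA (ws, swapVarS var varsort zs ws z1 z2 v) (qSwapAbs z1 z2 zs A)) := by
  refine qterm_ind ?_ ?_ ?_
  · intro xs x ws v h
    cases h
    rw [qSwap_qVar]
    exact OccT.var _ _
  · intro d inp binp hi hb ws v h
    rw [qSwap_qOp]
    cases h with
    | opT i X hX hocc =>
      exact OccT.opT i _ (by rw [hX]; rfl) (hi i X hX ws v hocc)
    | opA j A hA hocc =>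
      exact OccT.opA j _ (by rw [hA]; rfl) (hb j A hA ws v hocc)
  · intro xs x X hX ws v h
    rw [qSwapAbs_qAbs]
    cases h with
    | bound => exact OccA.bound _ _ _
    | body hocc => exact OccA.body (hX ws v hocc)

lemma occ_swap {z1 z2 : var} {zs : varsort} {X : QTerm var varsort index bindex opsym}
    {ws : varsort} {v : var} (h : OccT (ws, v) X) :
    OccT (ws, swapVarS var varsort zs ws z1 z2 v) (qSwap z1 z2 zs X) :=
  (occ_swap_pair z1 z2 zs).1 X ws v h

/-! #### qSwap equational lemmas -/

lemma qSwap_invol_pair (z1 z2 : var) (zs : varsort) :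
    (∀ X : QTerm var varsort index bindex opsym, qSwap z1 z2 zs (qSwap z1 z2 zs X) = X) ∧
    (∀ A : QAbs var varsort index bindex opsym, qSwapAbs z1 z2 zs (qSwapAbs z1 z2 zs A) = A) := by
  refine qterm_ind ?_ ?_ ?_
  · intro xs x; rw [qSwap_qVar, qSwap_qVar, swapVarS_invol]
  · intro d inp binp hi hb
    rw [qSwap_qOp, qSwap_qOp]
    congr 1
    · funext i
      cases h : inp i with
      | none => rfl
      | some X => simp [hi i X h]
    · funext j
      cases h : binp j with
      | none => rfl
      | some A => simp [hb j A h]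
  · intro xs x X hX
    rw [qSwapAbs_qAbs, qSwapAbs_qAbs, swapVarS_invol, hX]

lemma qSwap_invol (z1 z2 : var) (zs : varsort) (X : QTerm var varsort index bindex opsym) :
    qSwap z1 z2 zs (qSwap z1 z2 zs X) = X :=
  (qSwap_invol_pair z1 z2 zs).1 X

lemma occ_swap' {z1 z2 : var} {zs : varsort} {X : QTerm var varsort index bindex opsym}
    {ws : varsort} {v : var} (h : OccT (ws, v) (qSwap z1 z2 zs X)) :
    OccT (ws, swapVarS var varsort zs ws z1 z2 v) X := by
  have := occ_swap (z1 := z1) (z2 := z2) (zs := zs) h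
  rwa [qSwap_invol] at this

lemma qSwap_eq_self_pair (z1 z2 : var) (zs : varsort) :
    (∀ X : QTerm var varsort index bindex opsym,
      (∀ v, OccT (zs, v) X → swapVar var z1 z2 v = v) → qSwap z1 z2 zs X = X) ∧
    (∀ A : QAbs var varsort index bindex opsym,
      (∀ v, OccA (zs, v) A → swapVar var z1 z2 v = v) → qSwapAbs z1 z2 zs A = A) := by
  refine qterm_ind ?_ ?_ ?_
  · intro xs x h
    rw [qSwap_qVar]
    unfold swapVarS
    split_ifs with hs
    · subst hs; rw [h x (OccT.var _ _)]
    · rfl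
  · intro d inp binp hi hb h
    rw [qSwap_qOp]
    congr 1
    · funext i
      cases hx : inp i with
      | none => rfl
      | some X =>
        simp only [Option.map_some]
        rw [hi i X hx (fun v hv => h v (OccT.opT i X hx hv))]
    · funext j
      cases hx : binp j with
      | none => rfl
      | some A =>
        simp only [Option.map_some]
        rw [hb j A hx (fun v hv => h v (OccT.opA j A hx hv))]
  · intro xs x X hX h
    rw [qSwapAbs_qAbs]
    have hx : swapVarS var varsort zs xs z1 z2 x = x := by
      unfold swapVarS
      split_ifs with hs
      · subst hs; exact h x (OccA.bound _ _ _)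
      · rfl
    rw [hx, hX (fun v hv => h v (OccA.body hv))]

lemma qSwap_eq_self {z1 z2 : var} {zs : varsort} {X : QTerm var varsort index bindex opsym}
    (h : ∀ v, OccT (zs, v) X → swapVar var z1 z2 v = v) : qSwap z1 z2 zs X = X :=
  (qSwap_eq_self_pair z1 z2 zs).1 X h

lemma qSwap_self (z : var) (zs : varsort) (X : QTerm var varsort index bindex opsym) :
    qSwap z z zs X = X :=
  qSwap_eq_self (fun v _ => swapVar_self z v)

lemma qSwap_comm_pair (z1 z2 u v : var) (zs us : varsort) :
    (∀ X : QTerm var varsort index bindex opsym,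
      qSwap z1 z2 zs (qSwap u v us X)
        = qSwap (swapVarS var varsort zs us z1 z2 u) (swapVarS var varsort zs us z1 z2 v) us
            (qSwap z1 z2 zs X)) ∧
    (∀ A : QAbs var varsort index bindex opsym,
      qSwapAbs z1 z2 zs (qSwapAbs u v us A)
        = qSwapAbs (swapVarS var varsort zs us z1 z2 u) (swapVarS var varsort zs us z1 z2 v) us
            (qSwapAbs z1 z2 zs A)) := by
  refine qterm_ind ?_ ?_ ?_
  · intro xs x
    rw [qSwap_qVar, qSwap_qVar, qSwap_qVar, qSwap_qVar, swapVarS_comm]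
  · intro d inp binp hi hb
    rw [qSwap_qOp, qSwap_qOp, qSwap_qOp, qSwap_qOp]
    congr 1
    · funext i
      cases hx : inp i with
      | none => rfl
      | some X => simp [hi i X hx]
    · funext j
      cases hx : binp j with
      | none => rfl
      | some A => simp [hb j A hx]
  · intro xs x X hX
    rw [qSwapAbs_qAbs, qSwapAbs_qAbs, qSwapAbs_qAbs, qSwapAbs_qAbs, swapVarS_comm, hX]

lemma qSwap_comm (z1 z2 u v : var) (zs us : varsort)
    (X : QTerm var varsort index bindex opsym) :
    qSwap z1 z2 zs (qSwap u v us X)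
      = qSwap (swapVarS var varsort zs us z1 z2 u) (swapVarS var varsort zs us z1 z2 v) us
          (qSwap z1 z2 zs X) :=
  (qSwap_comm_pair z1 z2 u v zs us).1 X

end RenameAux
section RenameAux2

/-! #### equivariance of freshness -/

lemma fresh_swap {ws : varsort} {v : var} {X : QTerm var varsort index bindex opsym}
    (h : QFresh ws v X) (z1 z2 : var) (zs : varsort) :
    QFresh ws (swapVarS var varsort zs ws z1 z2 v) (qSwap z1 z2 zs X) := by
  refine QFresh.rec
    (motive_1 := fun X _ => QFresh ws (swapVarS var varsort zs ws z1 z2 v) (qSwap z1 z2 zs X))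
    (motive_2 := fun A _ => QFreshAbs ws (swapVarS var varsort zs ws z1 z2 v) (qSwapAbs z1 z2 zs A))
    ?_ ?_ ?_ ?_ h
  · intro xs x hne
    rw [qSwap_qVar]
    refine QFresh.qVar (fun he => ?_)
    rw [Prod.mk.injEq] at he
    obtain ⟨rfl, he⟩ := he
    exact hne (by rw [Prod.mk.injEq]; exact ⟨rfl, swapVarS_inj he⟩)
  · intro d inp binp _ _ hi hb
    rw [qSwap_qOp]
    refine QFresh.qOp (fun i X hX => ?_) (fun j A hA => ?_)
    · cases hx : inp i with
      | none => rw [hx] at hX; cases hX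
      | some X0 =>
        rw [hx] at hX
        cases hX
        exact hi i X0 hx
    · cases hx : binp j with
      | none => rw [hx] at hA; cases hA
      | some A0 =>
        rw [hx] at hA
        cases hA
        exact hb j A0 hx
  · intro X
    rw [qSwapAbs_qAbs]
    exact QFreshAbs.qAbs_bound
  · intro xs x X _ hX
    rw [qSwapAbs_qAbs]
    exact QFreshAbs.qAbs_body hX

/-! #### swapping preserves goodness -/

lemma idom_map_eq {α β : Type u} (inp : α → Option β) (f : β → β) :
    idom (fun a => (inp a).map f) = idom inp := by
  ext a
  simp [idom, Option.map_eq_none_iff]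

lemma good_swap_aux (z1 z2 : var) (zs : varsort)
    {X : QTerm var varsort index bindex opsym} (h : QGood X) :
    QGood (qSwap z1 z2 zs X) := by
  refine QGood.rec
    (motive_1 := fun X _ => QGood (qSwap z1 z2 zs X))
    (motive_2 := fun A _ => QGoodAbs (qSwapAbs z1 z2 zs A))
    ?_ ?_ ?_ h
  · intro xs x
    rw [qSwap_qVar]
    exact QGood.qVar
  · intro d inp binp _ _ hsm hsmb hi hb
    rw [qSwap_qOp]
    refine QGood.qOp (fun i X hX => ?_) (fun j A hA => ?_) ?_ ?_
    · cases hx : inp i with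
      | none => rw [hx] at hX; cases hX
      | some X0 => rw [hx] at hX; cases hX; exact hi i X0 hx
    · cases hx : binp j with
      | none => rw [hx] at hA; cases hA
      | some A0 => rw [hx] at hA; cases hA; exact hb j A0 hx
    · unfold smallDom at *
      rwa [idom_map_eq]
    · unfold smallDom at *
      rwa [idom_map_eq]
  · intro xs x X _ hX
    rw [qSwapAbs_qAbs]
    exact QGoodAbs.qAbs hX

/-! #### alpha: congruence of swapping, symmetry, invariance -/

lemma alpha_swap {X X' : QTerm var varsort index bindex opsym}
    (h : Alpha X X') (z1 z2 : var) (zs : varsort) :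
    Alpha (qSwap z1 z2 zs X) (qSwap z1 z2 zs X') := by
  refine Alpha.rec
    (motive_1 := fun X X' _ => Alpha (qSwap z1 z2 zs X) (qSwap z1 z2 zs X'))
    (motive_2 := fun A A' _ => AlphaAbs (qSwapAbs z1 z2 zs A) (qSwapAbs z1 z2 zs A'))
    ?_ ?_ ?_ h
  · intro xs x
    rw [qSwap_qVar]
    exact Alpha.qVar
  · intro d inp binp inp' binp' hn _ hbn _ hi hb
    rw [qSwap_qOp, qSwap_qOp]
    refine Alpha.qOp (fun i => by simp [Option.map_eq_none_iff, hn i])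
      (fun i X X' hX hX' => ?_)
      (fun j => by simp [Option.map_eq_none_iff, hbn j])
      (fun j A A' hA hA' => ?_)
    · cases hx : inp i with
      | none => rw [hx] at hX; cases hX
      | some X0 =>
        cases hx' : inp' i with
        | none => rw [hx'] at hX'; cases hX'
        | some X0' =>
          rw [hx] at hX; rw [hx'] at hX'
          cases hX; cases hX'
          exact hi i X0 X0' hx hx'
    · cases hx : binp j with
      | none => rw [hx] at hA; cases hA
      | some A0 =>
        cases hx' : binp' j with
        | none => rw [hx'] at hA'; cases hA'
        | some A0' =>
          rw [hx] at hA; rw [hx'] at hA'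
          cases hA; cases hA'
          exact hb j A0 A0' hx hx'
  · intro xs x x' X X' y hy hfX hfX' _ ih
    rw [qSwapAbs_qAbs, qSwapAbs_qAbs]
    refine AlphaAbs.qAbs (y := swapVarS var varsort zs xs z1 z2 y) ?_
      (fresh_swap hfX z1 z2 zs) (fresh_swap hfX' z1 z2 zs) ?_
    · intro hmem
      simp only [Set.mem_insert_iff, Set.mem_singleton_iff] at hmem hy
      rcases hmem with h1 | h1 <;> exact hy (by
        first
          | exact Or.inl (swapVarS_inj h1)
          | exact Or.inr (swapVarS_inj h1))
    · rw [← qSwap_comm, ← qSwap_comm]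
      exact ih

lemma alpha_symm_aux {X X' : QTerm var varsort index bindex opsym} (h : Alpha X X') :
    Alpha X' X := by
  refine Alpha.rec
    (motive_1 := fun X X' _ => Alpha X' X)
    (motive_2 := fun A A' _ => AlphaAbs A' A)
    ?_ ?_ ?_ h
  · intro xs x; exact Alpha.qVar
  · intro d inp binp inp' binp' hn _ hbn _ hi hb
    exact Alpha.qOp (fun i => (hn i).symm) (fun i X X' hX hX' => hi i X' X hX' hX)
      (fun j => (hbn j).symm) (fun j A A' hA hA' => hb j A' A hA' hA)
  · intro xs x x' X X' y hy hfX hfX' _ ih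
    refine AlphaAbs.qAbs (y := y) ?_ hfX' hfX ih
    intro hmem
    simp only [Set.mem_insert_iff, Set.mem_singleton_iff] at hmem hy
    exact hy hmem.symm

/-- Alpha preserves goodness (one direction). -/
lemma alpha_good_mp {X X' : QTerm var varsort index bindex opsym}
    (h : Alpha X X') (hg : QGood X) : QGood X' := by
  refine Alpha.rec
    (motive_1 := fun X X' _ => QGood X → QGood X')
    (motive_2 := fun A A' _ => QGoodAbs A → QGoodAbs A')
    ?_ ?_ ?_ h hg
  · intro xs x _; exact QGood.qVar
  · intro d inp binp inp' binp' hn _ hbn _ hi hb hg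
    cases hg with
    | qOp hgi hgb hsm hsmb =>
      refine QGood.qOp (fun i X' hX' => ?_) (fun j A' hA' => ?_) ?_ ?_
      · cases hx : inp i with
        | none => rw [(hn i).mp hx] at hX'; cases hX'
        | some X0 => exact hi i X0 X' hx hX' (hgi i X0 hx)
      · cases hx : binp j with
        | none => rw [(hbn j).mp hx] at hA'; cases hA'
        | some A0 => exact hb j A0 A' hx hA' (hgb j A0 hx)
      · unfold smallDom at *
        have : idom inp' = idom inp := by
          ext i; simp only [idom, ne_eq, Set.mem_setOf_eq]
          rw [not_iff_not]
          exact (hn i).symm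
        rwa [this]
      · unfold smallDom at *
        have : idom binp' = idom binp := by
          ext j; simp only [idom, ne_eq, Set.mem_setOf_eq]
          rw [not_iff_not]
          exact (hbn j).symm
        rwa [this]
  · intro xs x x' X X' y _ _ _ _ ih hg
    cases hg with
    | qAbs hgX =>
      have h1 : QGood (qSwap y x xs X) := good_swap_aux _ _ _ hgX
      have h2 : QGood (qSwap y x' xs X') := ih h1
      have h3 : QGood (qSwap y x' xs (qSwap y x' xs X')) := good_swap_aux _ _ _ h2
      rw [qSwap_invol] at h3
      exact QGoodAbs.qAbs h3

lemma alpha_good {X X' : QTerm var varsort index bindex opsym} (h : Alpha X X') :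
    QGood X ↔ QGood X' :=
  ⟨alpha_good_mp h, alpha_good_mp (alpha_symm_aux h)⟩

/-- Alpha preserves freshness (one direction). -/
lemma alpha_fresh_mp {X X' : QTerm var varsort index bindex opsym}
    (h : Alpha X X') {ws : varsort} {v : var} (hf : QFresh ws v X) : QFresh ws v X' := by
  refine Alpha.rec
    (motive_1 := fun X X' _ => ∀ ws v, QFresh ws v X → QFresh ws v X')
    (motive_2 := fun A A' _ => ∀ ws v, QFreshAbs ws v A → QFreshAbs ws v A')
    ?_ ?_ ?_ h ws v hf
  · intro xs x ws v hf; exact hf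
  · intro d inp binp inp' binp' hn _ hbn _ hi hb ws v hf
    cases hf with
    | qOp hfi hfb =>
      refine QFresh.qOp (fun i X' hX' => ?_) (fun j A' hA' => ?_)
      · cases hx : inp i with
        | none => rw [(hn i).mp hx] at hX'; cases hX'
        | some X0 => exact hi i X0 X' hx hX' ws v (hfi i X0 hx)
      · cases hx : binp j with
        | none => rw [(hbn j).mp hx] at hA'; cases hA'
        | some A0 => exact hb j A0 A' hx hA' ws v (hfb j A0 hx)
  · intro xs x x' X X' u hu hfX hfX' _ ih ws v hf
    simp only [Set.mem_insert_iff, Set.mem_singleton_iff] at hu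
    push_neg at hu
    obtain ⟨hux, hux'⟩ := hu
    -- key computation: transfer freshness through the swaps
    have key : ∀ w : var, w ≠ u → w ≠ x' → (w = x ∨ QFresh xs w X) → QFresh xs w X' := by
      intro w hwu hwx' hw
      by_cases hwx : w = x
      · subst hwx
        have h1 : QFresh xs w (qSwap u w xs X) := by
            have := fresh_swap hfX u w xs
            rwa [show swapVarS var varsort xs xs u w u = w by
              unfold swapVarS; rw [if_pos rfl]; exact swapVar_left u w] at this
        have h2 := ih xs w h1
        have h3 := fresh_swap h2 u x' xs
        rw [qSwap_invol] at h3
        rwa [show swapVarS var varsort xs xs u x' w = w by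
          unfold swapVarS; rw [if_pos rfl]; exact swapVar_of_ne hwu hwx'] at h3
      · have hw' : QFresh xs w X := hw.resolve_left hwx
        have h1 : QFresh xs w (qSwap u x xs X) := by
          have := fresh_swap hw' u x xs
          rwa [show swapVarS var varsort xs xs u x w = w by
            unfold swapVarS; rw [if_pos rfl]; exact swapVar_of_ne hwu hwx] at this
        have h2 := ih xs w h1
        have h3 := fresh_swap h2 u x' xs
        rw [qSwap_invol] at h3
        rwa [show swapVarS var varsort xs xs u x' w = w by
          unfold swapVarS; rw [if_pos rfl]; exact swapVar_of_ne hwu hwx'] at h3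
    cases hf with
    | qAbs_bound =>
      -- (ws, v) = (xs, x)
      by_cases hxx' : x = x'
      · subst hxx'; exact QFreshAbs.qAbs_bound
      · by_cases hxu : x = u
        · exact absurd hxu.symm hux
        · exact QFreshAbs.qAbs_body (key x hxu hxx' (Or.inl rfl))
    | qAbs_body hfv =>
      by_cases hvx' : (ws, v) = (xs, x')
      · rw [Prod.mk.injEq] at hvx'
        obtain ⟨rfl, rfl⟩ := hvx'
        exact QFreshAbs.qAbs_bound
      · by_cases hws : ws = xs
        · subst hws
          by_cases hvu : v = u
          · subst hvu; exact QFreshAbs.qAbs_body hfX'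
          · have hvx'' : v ≠ x' := by
              intro hc; exact hvx' (by rw [hc])
            exact QFreshAbs.qAbs_body (key v hvu hvx'' (Or.inr hfv))
        · -- ws ≠ xs : swaps at sort xs do not affect (ws, v)
          have h1 : QFresh ws v (qSwap u x xs X) := by
            have := fresh_swap hfv u x xs
            rwa [show swapVarS var varsort xs ws u x v = v by
              unfold swapVarS; rw [if_neg hws]] at this
          have h2 := ih ws v h1
          have h3 := fresh_swap h2 u x' xs
          rw [qSwap_invol] at h3
          rw [show swapVarS var varsort xs ws u x' v = v by
            unfold swapVarS; rw [if_neg hws]] at h3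
          exact QFreshAbs.qAbs_body h3

lemma alpha_fresh {X X' : QTerm var varsort index bindex opsym} (h : Alpha X X')
    (ws : varsort) (v : var) : QFresh ws v X ↔ QFresh ws v X' :=
  ⟨alpha_fresh_mp h, alpha_fresh_mp (alpha_symm_aux h)⟩

/-! #### EqvGen versions -/

lemma eqv_good {X X' : QTerm var varsort index bindex opsym}
    (h : Relation.EqvGen Alpha X X') : QGood X ↔ QGood X' := by
  induction h with
  | rel _ _ h => exact alpha_good h
  | refl _ => exact Iff.rfl
  | symm _ _ _ ih => exact ih.symm
  | trans _ _ _ _ _ ih1 ih2 => exact ih1.trans ih2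

lemma eqv_fresh {X X' : QTerm var varsort index bindex opsym}
    (h : Relation.EqvGen Alpha X X') (ws : varsort) (v : var) :
    QFresh ws v X ↔ QFresh ws v X' := by
  induction h with
  | rel _ _ h => exact alpha_fresh h ws v
  | refl _ => exact Iff.rfl
  | symm _ _ _ ih => exact ih.symm
  | trans _ _ _ _ _ ih1 ih2 => exact ih1.trans ih2

lemma eqv_qvar {X : QTerm var varsort index bindex opsym} {xs : varsort} {y : var}
    (h : Relation.EqvGen Alpha X (QTerm.qVar xs y)) : X = QTerm.qVar xs y := by
  have main : ∀ {a b : QTerm var varsort index bindex opsym},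
      Relation.EqvGen Alpha a b → (a = QTerm.qVar xs y ↔ b = QTerm.qVar xs y) := by
    intro a b h
    induction h with
    | rel _ _ h => cases h <;> simp
    | refl _ => exact Iff.rfl
    | symm _ _ _ ih => exact ih.symm
    | trans _ _ _ _ _ ih1 ih2 => exact ih1.trans ih2
  exact (main h).mpr rfl

end RenameAux2
section RenameAux3

/-! #### smallness of the occurrence set of a good quasiterm -/

lemma small_occ (hinf : Cardinal.aleph0 ≤ Cardinal.mk var)
    (hreg : (Cardinal.mk var).IsRegular)
    {X : QTerm var varsort index bindex opsym} (h : QGood X) :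
    Cardinal.mk {p | OccT p X} < Cardinal.mk var := by
  refine QGood.rec
    (motive_1 := fun X _ => Cardinal.mk {p | OccT p X} < Cardinal.mk var)
    (motive_2 := fun A _ => Cardinal.mk {p | OccA p A} < Cardinal.mk var)
    ?_ ?_ ?_ h
  · intro xs x
    have : {p | OccT p (QTerm.qVar xs x : QTerm var varsort index bindex opsym)}
        = {(xs, x)} := by
      ext p
      constructor
      · intro hp; cases hp; rfl
      · rintro rfl; exact OccT.var _ _
    rw [this, Cardinal.mk_singleton]
    exact lt_of_lt_of_le Cardinal.one_lt_aleph0 hinf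
  · intro d inp binp _ _ hsm hsmb hi hb
    have hsub : {p | OccT p (QTerm.qOp d inp binp)} ⊆
        (⋃ i : idom inp, {p | ∃ X, inp i.1 = some X ∧ OccT p X}) ∪
        (⋃ j : idom binp, {p | ∃ A, binp j.1 = some A ∧ OccA p A}) := by
      intro p hp
      cases hp with
      | opT i X hX hocc =>
        exact Or.inl (Set.mem_iUnion.mpr ⟨⟨i, by simp [idom, hX]⟩, ⟨X, hX, hocc⟩⟩)
      | opA j A hA hocc =>
        exact Or.inr (Set.mem_iUnion.mpr ⟨⟨j, by simp [idom, hA]⟩, ⟨A, hA, hocc⟩⟩)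
    refine lt_of_le_of_lt (Cardinal.mk_le_mk_of_subset hsub) ?_
    refine lt_of_le_of_lt (Cardinal.mk_union_le _ _)
      (Cardinal.add_lt_of_lt hinf ?_ ?_)
    · refine lt_of_le_of_lt (Cardinal.mk_iUnion_le _) (Cardinal.mul_lt_of_lt hinf hsm ?_)
      refine Cardinal.iSup_lt_of_isRegular hreg hsm ?_
      rintro ⟨i, hi'⟩
      obtain ⟨X, hX⟩ := Option.ne_none_iff_exists'.mp hi'
      have : {p | ∃ X0, inp i = some X0 ∧ OccT p X0} = {p | OccT p X} := by
        ext p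
        simp only [Set.mem_setOf_eq, hX]
        constructor
        · rintro ⟨X0, hX0, h0⟩; cases hX0; exact h0
        · intro h0; exact ⟨X, rfl, h0⟩
      rw [this]
      exact hi i X hX
    · refine lt_of_le_of_lt (Cardinal.mk_iUnion_le _) (Cardinal.mul_lt_of_lt hinf hsmb ?_)
      refine Cardinal.iSup_lt_of_isRegular hreg hsmb ?_
      rintro ⟨j, hj'⟩
      obtain ⟨A, hA⟩ := Option.ne_none_iff_exists'.mp hj'
      have : {p | ∃ A0, binp j = some A0 ∧ OccA p A0} = {p | OccA p A} := by
        ext p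
        simp only [Set.mem_setOf_eq, hA]
        constructor
        · rintro ⟨A0, hA0, h0⟩; cases hA0; exact h0
        · intro h0; exact ⟨A, rfl, h0⟩
      rw [this]
      exact hb j A hA
  · intro xs x X _ hX
    have hsub : {p | OccA p (QAbs.qAbs xs x X)} ⊆ insert (xs, x) {p | OccT p X} := by
      intro p hp
      cases hp with
      | bound => exact Set.mem_insert _ _
      | body h0 => exact Set.mem_insert_of_mem _ h0
    refine lt_of_le_of_lt (Cardinal.mk_le_mk_of_subset hsub) ?_
    refine lt_of_le_of_lt Cardinal.mk_insert_le (Cardinal.add_lt_of_lt hinf hX ?_)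
    exact lt_of_lt_of_le Cardinal.one_lt_aleph0 hinf

/-! #### existence of fresh variables -/

lemma exists_fresh (hinf : Cardinal.aleph0 ≤ Cardinal.mk var)
    (S : Set (varsort × var)) (hS : Cardinal.mk S < Cardinal.mk var)
    (ws : varsort) (L : List var) :
    ∃ u : var, (ws, u) ∉ S ∧ u ∉ L := by
  by_contra hcon
  push_neg at hcon
  have hsub : (Set.univ : Set var) ⊆ {v | (ws, v) ∈ S} ∪ {v | v ∈ L} := by
    intro v _
    by_cases h : (ws, v) ∈ S
    · exact Or.inl h
    · exact Or.inr (hcon v h)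
  have h1 : Cardinal.mk {v : var | (ws, v) ∈ S} ≤ Cardinal.mk S := by
    refine Cardinal.mk_le_of_injective (f := fun v => (⟨(ws, v.1), v.2⟩ : S)) ?_
    intro a b hab
    simp only [Subtype.mk.injEq, Prod.mk.injEq] at hab
    exact Subtype.ext hab.2
  have h2 : Cardinal.mk {v : var | v ∈ L} < Cardinal.mk var :=
    lt_of_lt_of_le (Set.Finite.lt_aleph0 (List.finite_toSet L)) hinf
  have : Cardinal.mk var ≤ Cardinal.mk ({v : var | (ws, v) ∈ S} ∪ {v | v ∈ L} : Set var) := by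
    have := Cardinal.mk_le_mk_of_subset hsub
    rwa [Cardinal.mk_univ] at this
  have hlt : Cardinal.mk ({v : var | (ws, v) ∈ S} ∪ {v | v ∈ L} : Set var)
      < Cardinal.mk var :=
    lt_of_le_of_lt (Cardinal.mk_union_le _ _)
      (Cardinal.add_lt_of_lt hinf (lt_of_le_of_lt h1 hS) h2)
  exact absurd (lt_of_le_of_lt this hlt) (lt_irrefl _)

/-! #### reflexivity of alpha on good quasiterms -/

/-- Iterated sorted swapping. -/
noncomputable def appS (σ : List (var × var × varsort)) :
    QTerm var varsort index bindex opsym → QTerm var varsort index bindex opsym :=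
  fun X => σ.foldr (fun t Y => qSwap t.1 t.2.1 t.2.2 Y) X

noncomputable def appSA (σ : List (var × var × varsort)) :
    QAbs var varsort index bindex opsym → QAbs var varsort index bindex opsym :=
  fun A => σ.foldr (fun t B => qSwapAbs t.1 t.2.1 t.2.2 B) A

noncomputable def swAll (σ : List (var × var × varsort)) (ws : varsort) (w : var) : var :=
  σ.foldr (fun t v => swapVarS var varsort t.2.2 ws t.1 t.2.1 v) w

@[simp] lemma appS_nil (X : QTerm var varsort index bindex opsym) : appS [] X = X := rfl

@[simp] lemma appS_cons (t : var × var × varsort) (σ : List (var × var × varsort))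
    (X : QTerm var varsort index bindex opsym) :
    appS (t :: σ) X = qSwap t.1 t.2.1 t.2.2 (appS σ X) := rfl

@[simp] lemma appSA_cons (t : var × var × varsort) (σ : List (var × var × varsort))
    (A : QAbs var varsort index bindex opsym) :
    appSA (t :: σ) A = qSwapAbs t.1 t.2.1 t.2.2 (appSA σ A) := rfl

lemma appS_qOp (σ : List (var × var × varsort)) (d : opsym)
    (inp : index → Option (QTerm var varsort index bindex opsym))
    (binp : bindex → Option (QAbs var varsort index bindex opsym)) :
    appS σ (QTerm.qOp d inp binp)
      = QTerm.qOp d (fun i => (inp i).map (appS σ)) (fun j => (binp j).map (appSA σ)) := by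
  induction σ with
  | nil =>
    simp only [appS_nil]
    congr 1
    · funext a; cases inp a <;> rfl
    · funext a; cases binp a <;> rfl
  | cons t σ ih =>
    rw [appS_cons, ih, qSwap_qOp]
    congr 1
    · funext i; cases inp i <;> simp
    · funext j; cases binp j <;> simp

lemma appSA_qAbs (σ : List (var × var × varsort)) (ws : varsort) (w : var)
    (B : QTerm var varsort index bindex opsym) :
    appSA σ (QAbs.qAbs ws w B) = QAbs.qAbs ws (swAll σ ws w) (appS σ B) := by
  induction σ with
  | nil => rfl
  | cons t σ ih =>
    rw [appSA_cons, ih, qSwapAbs_qAbs]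
    rfl

lemma appS_good (σ : List (var × var × varsort))
    {X : QTerm var varsort index bindex opsym} (h : QGood X) : QGood (appS σ X) := by
  induction σ with
  | nil => exact h
  | cons t σ ih => exact good_swap_aux _ _ _ ih

lemma alpha_refl_strong (hinf : Cardinal.aleph0 ≤ Cardinal.mk var)
    (hreg : (Cardinal.mk var).IsRegular) :
    (∀ X : QTerm var varsort index bindex opsym,
      QGood X → ∀ σ, Alpha (appS σ X) (appS σ X)) ∧
    (∀ A : QAbs var varsort index bindex opsym,
      QGoodAbs A → ∀ σ, AlphaAbs (appSA σ A) (appSA σ A)) := by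
  refine qterm_ind ?_ ?_ ?_
  · intro xs x _ σ
    rw [show appS σ (QTerm.qVar xs x) = QTerm.qVar xs (swAll σ xs x) from by
      induction σ with
      | nil => rfl
      | cons t σ ih => rw [appS_cons, ih, qSwap_qVar]; rfl]
    exact Alpha.qVar
  · intro d inp binp hi hb hg σ
    cases hg with
    | qOp hgi hgb _ _ =>
      rw [appS_qOp]
      refine Alpha.qOp (fun i => Iff.rfl) (fun i X X' hX hX' => ?_)
        (fun j => Iff.rfl) (fun j A A' hA hA' => ?_)
      · rw [hX] at hX'
        cases hx : inp i with
        | none => rw [hx] at hX; cases hX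
        | some X0 =>
          rw [hx] at hX
          cases hX
          cases hX'
          exact hi i X0 hx (hgi i X0 hx) σ
      · rw [hA] at hA'
        cases hx : binp j with
        | none => rw [hx] at hA; cases hA
        | some A0 =>
          rw [hx] at hA
          cases hA
          cases hA'
          exact hb j A0 hx (hgb j A0 hx) σ
  · intro ws w B hB hg σ
    cases hg with
    | qAbs hgB =>
      rw [appSA_qAbs]
      have hgood : QGood (appS σ B) := appS_good σ hgB
      obtain ⟨u, hu1, hu2⟩ := exists_fresh hinf {p | OccT p (appS σ B)}
        (small_occ hinf hreg hgood) ws [swAll σ ws w]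
      have hfu : QFresh ws u (appS σ B) := fresh_of_not_occ hu1
      refine AlphaAbs.qAbs (y := u) ?_ hfu hfu ?_
      · intro hmem
        simp only [Set.mem_insert_iff, Set.mem_singleton_iff] at hmem
        rcases hmem with h1 | h1 <;> exact hu2 (by simp [h1])
      · exact hB hgB ((u, swAll σ ws w, ws) :: σ)

lemma alpha_refl (hinf : Cardinal.aleph0 ≤ Cardinal.mk var)
    (hreg : (Cardinal.mk var).IsRegular)
    {X : QTerm var varsort index bindex opsym} (h : QGood X) : Alpha X X :=
  (alpha_refl_strong hinf hreg).1 X h []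

/-! #### abstraction congruence -/

lemma abs_cong (hinf : Cardinal.aleph0 ≤ Cardinal.mk var)
    (hreg : (Cardinal.mk var).IsRegular)
    {U V : QTerm var varsort index bindex opsym} (hU : QGood U) (h : Alpha U V)
    (ws : varsort) (w : var) :
    AlphaAbs (QAbs.qAbs ws w U) (QAbs.qAbs ws w V) := by
  have hV : QGood V := alpha_good_mp h hU
  obtain ⟨u, hu1, hu2⟩ := exists_fresh hinf
    ({p | OccT p U} ∪ {p | OccT p V})
    (lt_of_le_of_lt (Cardinal.mk_union_le _ _)
      (Cardinal.add_lt_of_lt hinf (small_occ hinf hreg hU) (small_occ hinf hreg hV)))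
    ws [w]
  refine AlphaAbs.qAbs (y := u) ?_
    (fresh_of_not_occ (fun hocc => hu1 (Or.inl hocc)))
    (fresh_of_not_occ (fun hocc => hu1 (Or.inr hocc)))
    (alpha_swap h u w ws)
  intro hmem
  simp only [Set.mem_insert_iff, Set.mem_singleton_iff] at hmem
  rcases hmem with h1 | h1 <;> exact hu2 (by simp [h1])

lemma abs_cong_eqv (hinf : Cardinal.aleph0 ≤ Cardinal.mk var)
    (hreg : (Cardinal.mk var).IsRegular)
    {U V : QTerm var varsort index bindex opsym}
    (h : Relation.EqvGen Alpha U V) (hU : QGood U) (ws : varsort) (w : var) :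
    amk (QAbs.qAbs ws w U) = amk (QAbs.qAbs ws w V) := by
  revert hU
  induction h with
  | rel a b hab =>
    exact fun hU => Quot.sound (abs_cong hinf hreg hU hab ws w)
  | refl a => exact fun _ => rfl
  | symm a b hab ih =>
    exact fun hV => (ih ((eqv_good hab).mpr hV)).symm
  | trans a b c hab hbc ih1 ih2 =>
    exact fun hU => (ih1 hU).trans (ih2 ((eqv_good hab).mp hU))

end RenameAux3
section RenameAux4

/-! #### characterization of substitution by a fresh variable -/

lemma subst_char {X Y Z : QTerm var varsort index bindex opsym} {xv : var} {ys : varsort}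
    (h : QSubst X Y xv ys Z) :
    ∀ y', Y = QTerm.qVar ys y' → QFresh ys y' X → Z = qSwap y' xv ys X := by
  refine QSubst.rec
    (motive_1 := fun X Y xv ys Z _ =>
      ∀ y', Y = QTerm.qVar ys y' → QFresh ys y' X → Z = qSwap y' xv ys X)
    (motive_2 := fun A Y xv ys B _ =>
      ∀ y', Y = QTerm.qVar ys y' → QFreshAbs ys y' A → B = qSwapAbs y' xv ys A)
    ?_ ?_ ?_ ?_ h
  · rintro Y y ys y' rfl hf
    rw [qSwap_qVar]
    congr 1
    unfold swapVarS
    rw [if_pos rfl, swapVar_right]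
  · rintro Y y ys xs x hne y' rfl hf
    rw [qSwap_qVar]
    cases hf with
    | qVar hne' =>
      congr 1
      unfold swapVarS
      split_ifs with hs
      · subst hs
        refine (swapVar_of_ne (fun hc => ?_) (fun hc => ?_)).symm
        · exact hne' (by rw [hc])
        · exact hne (by rw [hc])
      · rfl
  · intro Y y ys d inp binp inp' binp' hn _ hbn _ hi hb y' hY hf
    rw [qSwap_qOp]
    cases hf with
    | qOp hfi hfb =>
      congr 1
      · funext i
        cases hx : inp i with
        | none => rw [(hn i).mp hx]; rfl
        | some X0 =>
          have hne : inp' i ≠ none := fun hc => by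
            rw [(hn i).mpr hc] at hx; cases hx
          obtain ⟨X0', hx'⟩ := Option.ne_none_iff_exists'.mp hne
          rw [hx', Option.map_some]
          rw [hi i X0 X0' hx hx' y' hY (hfi i X0 hx)]
      · funext j
        cases hx : binp j with
        | none => rw [(hbn j).mp hx]; rfl
        | some A0 =>
          have hne : binp' j ≠ none := fun hc => by
            rw [(hbn j).mpr hc] at hx; cases hx
          obtain ⟨A0', hx'⟩ := Option.ne_none_iff_exists'.mp hne
          rw [hx', Option.map_some]
          rw [hb j A0 A0' hx hx' y' hY (hfb j A0 hx)]
  · rintro Y y ys xs x X X' hne hfY hsub ih y' rfl hf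
    rw [qSwapAbs_qAbs]
    have hbody : QFresh ys y' X := by
      cases hf with
      | qAbs_bound => exact absurd rfl (by cases hfY with | qVar h0 => exact h0)
      | qAbs_body hb => exact hb
    have hxne : swapVarS var varsort ys xs y' y x = x := by
      unfold swapVarS
      split_ifs with hs
      · subst hs
        refine swapVar_of_ne (fun hc => ?_) (fun hc => ?_)
        · cases hfY with
          | qVar h0 => exact h0 (by rw [hc])
        · exact hne (by rw [hc])
      · rfl
    rw [hxne, ih y' rfl hbody]

/-- In a term admitting a fresh-variable substitution, the fresh variable
does not occur at all. -/
lemma subst_no_occ {X Y Z : QTerm var varsort index bindex opsym} {xv : var} {ys : varsort}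
    (h : QSubst X Y xv ys Z) :
    ∀ y', Y = QTerm.qVar ys y' → QFresh ys y' X → xv ≠ y' → ¬ OccT (ys, y') X := by
  refine QSubst.rec
    (motive_1 := fun X Y xv ys Z _ =>
      ∀ y', Y = QTerm.qVar ys y' → QFresh ys y' X → xv ≠ y' → ¬ OccT (ys, y') X)
    (motive_2 := fun A Y xv ys B _ =>
      ∀ y', Y = QTerm.qVar ys y' → QFreshAbs ys y' A → xv ≠ y' → ¬ OccA (ys, y') A)
    ?_ ?_ ?_ ?_ h
  · rintro Y y ys y' rfl hf hne hocc
    cases hocc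
    exact hne rfl
  · rintro Y y ys xs x hne0 y' rfl hf hne hocc
    cases hocc
    cases hf with
    | qVar h0 => exact h0 rfl
  · intro Y y ys d inp binp inp' binp' hn _ hbn _ hi hb y' hY hf hne hocc
    cases hf with
    | qOp hfi hfb =>
      cases hocc with
      | opT i X0 hX0 h0 =>
        have hne' : inp' i ≠ none := fun hc => by
          rw [(hn i).mpr hc] at hX0; cases hX0
        obtain ⟨X0', hx'⟩ := Option.ne_none_iff_exists'.mp hne'
        exact hi i X0 X0' hX0 hx' y' hY (hfi i X0 hX0) hne h0
      | opA j A0 hA0 h0 =>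
        have hne' : binp' j ≠ none := fun hc => by
          rw [(hbn j).mpr hc] at hA0; cases hA0
        obtain ⟨A0', hx'⟩ := Option.ne_none_iff_exists'.mp hne'
        exact hb j A0 A0' hA0 hx' y' hY (hfb j A0 hA0) hne h0
  · rintro Y y ys xs x X X' hne0 hfY hsub ih y' rfl hf hne hocc
    cases hocc with
    | bound =>
      cases hfY with
      | qVar h0 => exact h0 rfl
    | body h0 =>
      cases hf with
      | qAbs_bound =>
        cases hfY with
        | qVar h1 => exact h1 rfl
      | qAbs_body hb => exact ih y' rfl hb hne h0

/-! #### terms with no binders in a forbidden set -/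

mutual
/-- No binder of the quasiterm belongs to `F`. -/
inductive NBt (F : Set (varsort × var)) : QTerm var varsort index bindex opsym → Prop where
  | var : ∀ xs x, NBt F (.qVar xs x)
  | op : ∀ {d inp binp}, (∀ i X, inp i = some X → NBt F X) →
      (∀ j A, binp j = some A → NBa F A) → NBt F (.qOp d inp binp)
/-- No binder of the quasiabstraction belongs to `F`. -/
inductive NBa (F : Set (varsort × var)) : QAbs var varsort index bindex opsym → Prop where
  | abs : ∀ {xs x X}, (xs, x) ∉ F → NBt F X → NBa F (.qAbs xs x X)
end

lemma NBt_swap {F : Set (varsort × var)} {X : QTerm var varsort index bindex opsym}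
    (h : NBt F X) (z1 z2 : var) (zs : varsort)
    (h1 : ¬ OccT (zs, z1) X) (h2 : (zs, z1) ∉ F) :
    NBt F (qSwap z1 z2 zs X) := by
  refine NBt.rec
    (motive_1 := fun X _ => ¬ OccT (zs, z1) X → NBt F (qSwap z1 z2 zs X))
    (motive_2 := fun A _ => ¬ OccA (zs, z1) A → NBa F (qSwapAbs z1 z2 zs A))
    ?_ ?_ ?_ h h1
  · intro xs x _
    rw [qSwap_qVar]
    exact NBt.var _ _
  · intro d inp binp _ _ hi hb hocc
    rw [qSwap_qOp]
    refine NBt.op (fun i X hX => ?_) (fun j A hA => ?_)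
    · cases hx : inp i with
      | none => rw [hx] at hX; cases hX
      | some X0 =>
        rw [hx] at hX; cases hX
        exact hi i X0 hx (fun h0 => hocc (OccT.opT i X0 hx h0))
    · cases hx : binp j with
      | none => rw [hx] at hA; cases hA
      | some A0 =>
        rw [hx] at hA; cases hA
        exact hb j A0 hx (fun h0 => hocc (OccT.opA j A0 hx h0))
  · intro xs x X hxF _ hX hocc
    rw [qSwapAbs_qAbs]
    refine NBa.abs ?_ (hX (fun h0 => hocc (OccA.body h0)))
    intro hmem
    by_cases hs : xs = zs
    · subst hs
      rw [show swapVarS var varsort xs xs z1 z2 x = swapVar var z1 z2 x from by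
        unfold swapVarS; rw [if_pos rfl]] at hmem
      by_cases hx1 : x = z1
      · exact hocc (hx1 ▸ OccA.bound xs x X)
      · by_cases hx2 : x = z2
        · rw [hx2, swapVar_right] at hmem
          exact h2 hmem
        · rw [swapVar_of_ne hx1 hx2] at hmem
          exact hxF hmem
    · rw [show swapVarS var varsort zs xs z1 z2 x = x from by
        unfold swapVarS; rw [if_neg hs]] at hmem
      exact hxF hmem

/-! #### substitution along a clean representative -/

lemma subst_exists {xs : varsort} {x y : var}
    {X : QTerm var varsort index bindex opsym}
    (hNB : NBt {(xs, x), (xs, y)} X) (hf : QFresh xs y X) :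
    QSubst X (QTerm.qVar xs y) x xs (qSwap y x xs X) := by
  refine NBt.rec
    (motive_1 := fun X _ => QFresh xs y X → QSubst X (QTerm.qVar xs y) x xs (qSwap y x xs X))
    (motive_2 := fun A _ => QFreshAbs xs y A → (∀ ws w B, A = QAbs.qAbs ws w B → (ws, w) ≠ (xs, y)) →
      QSubstAbs A (QTerm.qVar xs y) x xs (qSwapAbs y x xs A))
    ?_ ?_ ?_ hNB hf
  · intro ws w hfw
    by_cases he : (ws, w) = (xs, x)
    · rw [Prod.mk.injEq] at he
      obtain ⟨rfl, rfl⟩ := he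
      rw [qSwap_qVar, show swapVarS var varsort ws ws y w w = y from by
        unfold swapVarS; rw [if_pos rfl, swapVar_right]]
      exact QSubst.var_eq
    · rw [qSwap_qVar, show swapVarS var varsort xs ws y x w = w from by
        unfold swapVarS
        split_ifs with hs
        · subst hs
          refine swapVar_of_ne (fun hc => ?_) (fun hc => ?_)
          · cases hfw with
            | qVar h0 => exact h0 (by rw [hc])
          · exact he (by rw [hc])
        · rfl]
      exact QSubst.var_ne he
  · intro d inp binp hnb hnba hi hb hfop
    have hfi : ∀ i X0, inp i = some X0 → QFresh xs y X0 := by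
      cases hfop with | qOp h1 h2 => exact h1
    have hfb : ∀ j A0, binp j = some A0 → QFreshAbs xs y A0 := by
      cases hfop with | qOp h1 h2 => exact h2
    rw [qSwap_qOp]
    refine QSubst.op (fun i => by simp [Option.map_eq_none_iff]) (fun i X0 X0' hX0 hX0' => ?_)
      (fun j => by simp [Option.map_eq_none_iff]) (fun j A0 A0' hA0 hA0' => ?_)
    · rw [hX0, Option.map_some] at hX0'
      cases hX0'
      exact hi i X0 hX0 (hfi i X0 hX0)
    · rw [hA0, Option.map_some] at hA0'
      cases hA0'
      refine hb j A0 hA0 (hfb j A0 hA0) ?_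
      rintro ws w B rfl hc
      have := hnba j _ hA0
      cases this with
      | abs hF _ => exact hF (by rw [hc]; exact Set.mem_insert_of_mem _ rfl)
  · intro ws w B hwF hnbB ih hfA hbind
    have hwx : (ws, w) ≠ (xs, x) := fun hc => hwF (hc ▸ Set.mem_insert _ _)
    have hwy : (ws, w) ≠ (xs, y) := fun hc => hwF (by rw [hc]; exact Set.mem_insert_of_mem _ rfl)
    have hfB : QFresh xs y B := by
      cases hfA with
      | qAbs_bound => exact absurd rfl hwy
      | qAbs_body hb => exact hb
    rw [qSwapAbs_qAbs, show swapVarS var varsort xs ws y x w = w from by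
      unfold swapVarS
      split_ifs with hs
      · subst hs
        refine swapVar_of_ne (fun hc => ?_) (fun hc => ?_)
        · exact hwy (by rw [hc])
        · exact hwx (by rw [hc])
      · rfl]
    exact QSubstAbs.abs hwx (QFresh.qVar hwy) (ih hfB)

end RenameAux4
section RenameAux5

/-- A canonical alpha-variant avoiding the forbidden binder set, when one exists. -/
noncomputable def nbRep (F : Set (varsort × var)) (X0 : QTerm var varsort index bindex opsym) :
    QTerm var varsort index bindex opsym :=
  if h : ∃ X', Alpha X0 X' ∧ NBt F X' then h.choose else X0

noncomputable def nbRepA (F : Set (varsort × var)) (A0 : QAbs var varsort index bindex opsym) :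
    QAbs var varsort index bindex opsym :=
  if h : ∃ A', AlphaAbs A0 A' ∧ NBa F A' then h.choose else A0

lemma nbRep_spec {F : Set (varsort × var)} {X0 : QTerm var varsort index bindex opsym}
    (h : ∃ X', Alpha X0 X' ∧ NBt F X') : Alpha X0 (nbRep F X0) ∧ NBt F (nbRep F X0) := by
  unfold nbRep
  rw [dif_pos h]
  exact h.choose_spec

lemma nbRepA_spec {F : Set (varsort × var)} {A0 : QAbs var varsort index bindex opsym}
    (h : ∃ A', AlphaAbs A0 A' ∧ NBa F A') : AlphaAbs A0 (nbRepA F A0) ∧ NBa F (nbRepA F A0) := by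
  unfold nbRepA
  rw [dif_pos h]
  exact h.choose_spec

lemma rename_to_NB (hinf : Cardinal.aleph0 ≤ Cardinal.mk var)
    (hreg : (Cardinal.mk var).IsRegular) (xs : varsort) (x y : var) :
    (∀ X : QTerm var varsort index bindex opsym, QGood X →
      ∃ X', Alpha X X' ∧ NBt {(xs, x), (xs, y)} X') ∧
    (∀ A : QAbs var varsort index bindex opsym, QGoodAbs A →
      ∃ A', AlphaAbs A A' ∧ NBa {(xs, x), (xs, y)} A') := by
  set F : Set (varsort × var) := {(xs, x), (xs, y)} with hF
  refine qterm_ind ?_ ?_ ?_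
  · intro ws w _
    exact ⟨_, Alpha.qVar, NBt.var ws w⟩
  · intro d inp binp hi hb hg
    cases hg with
    | qOp hgi hgb _ _ =>
      refine ⟨QTerm.qOp d (fun i => (inp i).map (nbRep F)) (fun j => (binp j).map (nbRepA F)),
        ?_, ?_⟩
      · refine Alpha.qOp (fun i => by simp [Option.map_eq_none_iff])
          (fun i X0 X0' hX0 hX0' => ?_)
          (fun j => by simp [Option.map_eq_none_iff])
          (fun j A0 A0' hA0 hA0' => ?_)
        · rw [hX0, Option.map_some] at hX0'
          cases hX0'
          exact (nbRep_spec (hi i X0 hX0 (hgi i X0 hX0))).1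
        · rw [hA0, Option.map_some] at hA0'
          cases hA0'
          exact (nbRepA_spec (hb j A0 hA0 (hgb j A0 hA0))).1
      · refine NBt.op (fun i X0' hX0' => ?_) (fun j A0' hA0' => ?_)
        · cases hx : inp i with
          | none => rw [hx] at hX0'; cases hX0'
          | some X0 =>
            rw [hx, Option.map_some] at hX0'
            cases hX0'
            exact (nbRep_spec (hi i X0 hx (hgi i X0 hx))).2
        · cases hx : binp j with
          | none => rw [hx] at hA0'; cases hA0'
          | some A0 =>
            rw [hx, Option.map_some] at hA0'
            cases hA0'
            exact (nbRepA_spec (hb j A0 hx (hgb j A0 hx))).2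
  · intro ws w B hB hg
    cases hg with
    | qAbs hgB =>
      obtain ⟨B', hαB, hNBB⟩ := hB hgB
      have hgB' : QGood B' := alpha_good_mp hαB hgB
      obtain ⟨w', hw'1, hw'2⟩ := exists_fresh hinf {p | OccT p B'}
        (small_occ hinf hreg hgB') ws [x, y, w]
      simp only [List.mem_cons, List.not_mem_nil, or_false, not_or] at hw'2
      obtain ⟨hw'x, hw'y, hw'w⟩ := hw'2
      refine ⟨QAbs.qAbs ws w' (qSwap w' w ws B'), ?_, ?_⟩
      · obtain ⟨u, hu1, hu2⟩ := exists_fresh hinf ({p | OccT p B} ∪ {p | OccT p B'})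
          (lt_of_le_of_lt (Cardinal.mk_union_le _ _)
            (Cardinal.add_lt_of_lt hinf (small_occ hinf hreg hgB) (small_occ hinf hreg hgB')))
          ws [w, w']
        simp only [List.mem_cons, List.not_mem_nil, or_false, not_or] at hu2
        obtain ⟨huw, huw'⟩ := hu2
        have hu1B : (ws, u) ∉ {p | OccT p B} := fun h => hu1 (Or.inl h)
        have hu1B' : (ws, u) ∉ {p | OccT p B'} := fun h => hu1 (Or.inr h)
        refine AlphaAbs.qAbs (y := u) ?_ (fresh_of_not_occ hu1B) ?_ ?_
        · intro hmem
          simp only [Set.mem_insert_iff, Set.mem_singleton_iff] at hmem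
          rcases hmem with h1 | h1
          · exact huw h1
          · exact huw' h1
        · refine fresh_of_not_occ (fun hocc => ?_)
          have h2 := occ_swap' hocc
          rw [show swapVarS var varsort ws ws w' w u = u from by
            unfold swapVarS; rw [if_pos rfl]; exact swapVar_of_ne huw' huw] at h2
          exact hu1B' h2
        · have e1 : qSwap u w' ws (qSwap w' w ws B')
              = qSwap (swapVarS var varsort ws ws u w' w') (swapVarS var varsort ws ws u w' w) ws
                  (qSwap u w' ws B') := qSwap_comm u w' w' w ws ws B'
          have e2 : qSwap u w' ws B' = B' := qSwap_eq_self (fun v hv => by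
            refine swapVar_of_ne (fun hc => ?_) (fun hc => ?_)
            · exact hu1B' (hc ▸ hv)
            · exact hw'1 (hc ▸ hv))
          rw [e1, e2, show swapVarS var varsort ws ws u w' w' = u from by
              unfold swapVarS; rw [if_pos rfl, swapVar_right],
            show swapVarS var varsort ws ws u w' w = w from by
              unfold swapVarS; rw [if_pos rfl]
              exact swapVar_of_ne (fun hc => huw hc.symm) (fun hc => hw'w hc.symm)]
          exact alpha_swap hαB u w ws
      · refine NBa.abs ?_ (NBt_swap hNBB w' w ws hw'1 ?_)
        · intro hmem
          rw [hF] at hmem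
          simp only [Set.mem_insert_iff, Set.mem_singleton_iff, Prod.mk.injEq] at hmem
          rcases hmem with ⟨_, h1⟩ | ⟨_, h1⟩
          · exact hw'x h1
          · exact hw'y h1
        · intro hmem
          rw [hF] at hmem
          simp only [Set.mem_insert_iff, Set.mem_singleton_iff, Prod.mk.injEq] at hmem
          rcases hmem with ⟨_, h1⟩ | ⟨_, h1⟩
          · exact hw'x h1
          · exact hw'y h1

end RenameAux5
/-- the bound variable of an abstraction can be renamed, via
substitution, to any variable fresh for the body. -/
theorem abs_rename (hinf : Cardinal.aleph0 ≤ Cardinal.mk var)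
    (hreg : (Cardinal.mk var).IsRegular)
    (X : Term var varsort index bindex opsym) (hX : good X)
    (xs : varsort) (x y : var) (hfr : fresh xs y X) :
    Abs xs x X = Abs xs y (subst X (Var xs y) x xs) := by
  classical
  have hXg : QGood (trep X) := hX
  have hfr' : QFresh xs y (trep X) := hfr
  have hrepVar : trep (Var xs y : Term var varsort index bindex opsym) = QTerm.qVar xs y := by
    refine eqv_qvar (Quot.eq.mp ?_)
    show Quot.mk _ (Quot.out (Var xs y)) = _
    exact Quot.out_eq (Var xs y)
  obtain ⟨X', hαX', hNB⟩ := (rename_to_NB hinf hreg xs x y).1 (trep X) hXg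
  have hfrX' : QFresh xs y X' := alpha_fresh_mp hαX' hfr'
  have hsub : QSubst X' (QTerm.qVar xs y) x xs (qSwap y x xs X') := subst_exists hNB hfrX'
  have hmkX' : tmk X' = X := (Quot.sound hαX').symm.trans (Quot.out_eq X)
  have hex : ∃ Z, SubstRel X (Var xs y) x xs Z :=
    ⟨tmk (qSwap y x xs X'), X', qSwap y x xs X', hmkX', rfl, by rw [hrepVar]; exact hsub⟩
  have hZ : SubstRel X (Var xs y) x xs (subst X (Var xs y) x xs) := by
    unfold subst
    rw [dif_pos hex]
    exact hex.choose_spec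
  obtain ⟨qX, qZ, hqX, hqZ, hQS⟩ := hZ
  rw [hrepVar] at hQS
  have heqv : Relation.EqvGen Alpha (trep X) qX :=
    Quot.eq.mp ((Quot.out_eq X).trans hqX.symm)
  have hgqX : QGood qX := (eqv_good heqv).mp hXg
  have hfqX : QFresh xs y qX := (eqv_fresh heqv xs y).mp hfr'
  have hqZeq : qZ = qSwap y x xs qX := subst_char hQS y rfl hfqX
  have hgqZ : QGood qZ := by rw [hqZeq]; exact good_swap_aux _ _ _ hgqX
  have heqv2 : Relation.EqvGen Alpha qZ (trep (subst X (Var xs y) x xs)) :=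
    Quot.eq.mp (hqZ.trans (Quot.out_eq _).symm)
  show amk (QAbs.qAbs xs x (trep X)) = amk (QAbs.qAbs xs y (trep (subst X (Var xs y) x xs)))
  have step1 : amk (QAbs.qAbs xs x (trep X)) = amk (QAbs.qAbs xs x qX) :=
    abs_cong_eqv hinf hreg heqv hXg xs x
  have step3 : amk (QAbs.qAbs xs y qZ)
      = amk (QAbs.qAbs xs y (trep (subst X (Var xs y) x xs))) :=
    abs_cong_eqv hinf hreg heqv2 hgqZ xs y
  rw [step1, ← step3]
  by_cases hxy : x = y
  · subst hxy
    rw [hqZeq, qSwap_self]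
  · apply Quot.sound
    have hnoy : ¬ OccT (xs, y) qX := subst_no_occ hQS y rfl hfqX hxy
    obtain ⟨u, hu1, hu2⟩ := exists_fresh hinf {p | OccT p qX}
      (small_occ hinf hreg hgqX) xs [x, y]
    simp only [List.mem_cons, List.not_mem_nil, or_false, not_or] at hu2
    obtain ⟨hux, huy⟩ := hu2
    refine AlphaAbs.qAbs (y := u) ?_ (fresh_of_not_occ hu1) ?_ ?_
    · intro hmem
      simp only [Set.mem_insert_iff, Set.mem_singleton_iff] at hmem
      rcases hmem with h1 | h1
      · exact hux h1
      · exact huy h1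
    · refine fresh_of_not_occ (fun hocc => ?_)
      rw [hqZeq] at hocc
      have h2 := occ_swap' hocc
      rw [show swapVarS var varsort xs xs y x u = u from by
        unfold swapVarS; rw [if_pos rfl]; exact swapVar_of_ne huy hux] at h2
      exact hu1 h2
    · rw [hqZeq]
      have e1 : qSwap u y xs (qSwap y x xs qX)
          = qSwap (swapVarS var varsort xs xs u y y) (swapVarS var varsort xs xs u y x) xs
              (qSwap u y xs qX) := qSwap_comm u y y x xs xs qX
      have e2 : qSwap u y xs qX = qX := qSwap_eq_self (fun v hv => by
        refine swapVar_of_ne (fun hc => ?_) (fun hc => ?_)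
        · exact hu1 (hc ▸ hv)
        · exact hnoy (hc ▸ hv))
      rw [e1, e2, show swapVarS var varsort xs xs u y y = u from by
          unfold swapVarS; rw [if_pos rfl, swapVar_right],
        show swapVarS var varsort xs xs u y x = x from by
          unfold swapVarS; rw [if_pos rfl]
          exact swapVar_of_ne (fun hc => hux hc.symm) hxy]
      exact alpha_refl hinf hreg (good_swap_aux u x xs hgqX)

end Binding
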